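/- arXiv:1610.07253 — 2 statements merged into one kernel-verified Lean document; each statement's English description precedes it below -/
import Mathlib

section
/- Let [H,G] be a boolean interval of finite groups of rank n and index |G:H| = p^{n-1} q, with p, q prime and p ≤ q, and let m be the number of coatoms L ∈ [H,G] with |G:L| = q. Then the dual Euler totient satisfies φ̂(H,G) = (p-1)^n · [1 + ((q-p)/p)·(1 - 1/(1-p)^m)], and in particular φ̂(H,G) ≥ (p-1)^n > 0. -/
/-- `K` is a minimal overgroup of `H` (an atom of the interval `[H,G]`):
`H < K` and nothing lies strictly between `H` and `K`. -/
def IsMinimalOvergroup {G : Type*} [Group G] (H K : Subgroup G) : Prop :=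
  H < K ∧ ∀ K' : Subgroup G, H < K' → K' ≤ K → K' = K

/-- The interval `[H,G]` is linearly primitive: there is a finite-dimensional
irreducible complex representation `V` of `G` such that the pointwise stabilizer
of the fixed-point subspace `V^H` is exactly `H`. -/
def IsLinearlyPrimitive {G : Type*} [Group G] (H : Subgroup G) : Prop :=
  ∃ (V : Type) (_ : AddCommGroup V) (_ : Module ℂ V) (ρ : Representation ℂ G V),
    FiniteDimensional ℂ V ∧ Nontrivial V ∧
    (∀ U : Submodule ℂ V, (∀ g : G, ∀ v ∈ U, ρ g v ∈ U) → U = ⊥ ∨ U = ⊤) ∧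
    {g : G | ∀ v : V, (∀ h : G, h ∈ H → ρ h v = v) → ρ g v = v} = (H : Set G)

/-- The interval `[H,G]` is boolean: order-isomorphic to the lattice of subsets of
a finite set. -/
def IsBooleanInterval {G : Type*} [Group G] (H : Subgroup G) : Prop :=
  ∃ n : ℕ, Nonempty ((Set.Icc H (⊤ : Subgroup G)) ≃o Set (Fin n))

/-- The dual Euler totient of a boolean interval `[H,G]`, computed via an order
isomorphism `e` with the boolean lattice of subsets of `Fin n`:
`φ̂(H,G) = ∑_{K ∈ [H,G]} (-1)^{ℓ(H,K)} |G:K|`, where the rank `ℓ(H,K)` of the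
boolean interval `[H,K]` is the cardinality of `e K`. -/
noncomputable def dualEulerTotient {G : Type*} [Group G] (H : Subgroup G) {n : ℕ}
    (e : (Set.Icc H (⊤ : Subgroup G)) ≃o Set (Fin n)) : ℤ :=
  ∑ᶠ K : (Set.Icc H (⊤ : Subgroup G)),
    (-1 : ℤ) ^ ((e K).ncard) * ((K : Subgroup G).index : ℤ)


open ArithmeticFunction ArithmeticFunction.Omega in
theorem detAux {G : Type*} [Group G] [Finite G] (H : Subgroup G) {n p q : ℕ}
    (hp : p.Prime) (hq : q.Prime) (hpq : p ≤ q)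
    (e : (Set.Icc H (⊤ : Subgroup G)) ≃o Set (Fin n))
    (hind : H.index = p ^ (n - 1) * q) :
    ∃ M : Set (Fin n),
      (∀ S : Set (Fin n),
        (M ⊆ S ∧ (e.symm S).1.index * p ^ S.ncard = p ^ n) ∨
        (¬ M ⊆ S ∧ (e.symm S).1.index * p ^ S.ncard * p = p ^ n * q)) ∧
      {L : Subgroup G | H ≤ L ∧ IsCoatom L ∧ L.index = q}.ncard = M.ncard := by
  classical
  set K : Set (Fin n) → Subgroup G := fun S => (e.symm S).1 with hK
  have hKle : ∀ S, H ≤ K S := fun S => (e.symm S).2.1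
  have hKmono : ∀ {S T}, S ⊆ T → K S ≤ K T := by
    intro S T h
    exact Subtype.coe_le_coe.mpr (e.symm.monotone h)
  have hKle_iff : ∀ {S T}, K S ≤ K T ↔ S ⊆ T := by
    intro S T
    constructor
    · intro h
      exact e.symm.le_iff_le.mp (Subtype.coe_le_coe.mp h)
    · exact hKmono
  have hKinj : Function.Injective K := by
    intro S T h
    exact subset_antisymm (hKle_iff.mp h.le) (hKle_iff.mp h.ge)
  have hKuniv : K Set.univ = ⊤ := by
    have h1 : K (e ⟨⊤, le_top, le_rfl⟩) = ⊤ := by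
      simp only [hK, OrderIso.symm_apply_apply]
    have h2 : ⊤ ≤ K Set.univ := h1 ▸ hKmono (Set.subset_univ _)
    exact le_antisymm le_top h2
  have hKempty : K ∅ = H := by
    have h1 : K (e ⟨H, le_rfl, le_top⟩) = H := by
      simp only [hK, OrderIso.symm_apply_apply]
    have h2 : K ∅ ≤ H := h1 ▸ hKmono (Set.empty_subset _)
    exact le_antisymm h2 (hKle _)
  -- relative index and prime-factor counting
  set ρ : Set (Fin n) → ℕ := fun S => H.relIndex (K S) with hρ
  have hρι : ∀ S, ρ S * (K S).index = H.index := fun S =>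
    Subgroup.relIndex_mul_index (hKle S)
  have hρ0 : ∀ S, ρ S ≠ 0 := fun S => Subgroup.index_ne_zero_of_finite
  have hι0 : ∀ S, (K S).index ≠ 0 := fun S => Subgroup.index_ne_zero_of_finite
  have hrel0 : ∀ (A B : Subgroup G), A.relIndex B ≠ 0 := fun A B =>
    Subgroup.index_ne_zero_of_finite
  have hΩpos : ∀ k : ℕ, k ≠ 0 → k ≠ 1 → 1 ≤ Ω k := by
    intro k h0 h1
    rw [cardFactors_apply]
    have := List.length_pos_iff.mpr (mt (Nat.primeFactorsList_eq_nil k).mp (by tauto))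
    omega
  -- lower bound on Ω (ρ S)
  have omega_rho : ∀ (k : ℕ) (S : Set (Fin n)), S.ncard = k → k ≤ Ω (ρ S) := by
    intro k
    induction k with
    | zero => intro S _; exact Nat.zero_le _
    | succ k ih =>
      intro S hS
      have hne : S.Nonempty := Set.nonempty_of_ncard_ne_zero (by omega)
      obtain ⟨i, hi⟩ := hne
      set S' := S \ {i} with hS'def
      have hS' : S'.ncard = k := by
        rw [hS'def, Set.ncard_diff_singleton_of_mem hi, hS]
        omega
      have hsub : S' ⊆ S := Set.diff_subset
      have hmul : ρ S' * (K S').relIndex (K S) = ρ S :=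
        Subgroup.relIndex_mul_relIndex H (K S') (K S) (hKle S') (hKmono hsub)
      have hr1 : (K S').relIndex (K S) ≠ 1 := by
        intro h
        have : K S ≤ K S' := Subgroup.relIndex_eq_one.mp h
        have : S ⊆ S' := hKle_iff.mp this
        exact (this hi).2 rfl
      have : Ω (ρ S) = Ω (ρ S') + Ω ((K S').relIndex (K S)) := by
        rw [← hmul, cardFactors_mul (hρ0 S') (hrel0 _ _)]
      rw [this]
      have := ih S' hS'
      have := hΩpos _ (hrel0 (K S') (K S)) hr1
      omega
  -- lower bound on Ω (index (K S))
  have omega_iota : ∀ (k : ℕ) (S : Set (Fin n)), Sᶜ.ncard = k → k ≤ Ω ((K S).index) := by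
    intro k
    induction k with
    | zero => intro S _; exact Nat.zero_le _
    | succ k ih =>
      intro S hS
      have hne : Sᶜ.Nonempty := Set.nonempty_of_ncard_ne_zero (by omega)
      obtain ⟨i, hi⟩ := hne
      set S' := insert i S with hS'def
      have hcompl : S'ᶜ = Sᶜ \ {i} := by
        rw [hS'def]
        ext j
        simp [not_or, and_comm]
      have hS' : S'ᶜ.ncard = k := by
        rw [hcompl, Set.ncard_diff_singleton_of_mem hi, hS]
        omega
      have hsub : S ⊆ S' := Set.subset_insert i S
      have hmul : (K S).relIndex (K S') * (K S').index = (K S).index :=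
        Subgroup.relIndex_mul_index (hKmono hsub)
      have hr1 : (K S).relIndex (K S') ≠ 1 := by
        intro h
        have : K S' ≤ K S := Subgroup.relIndex_eq_one.mp h
        have : S' ⊆ S := hKle_iff.mp this
        exact hi (this (Set.mem_insert i S))
      have : Ω ((K S).index) = Ω ((K S).relIndex (K S')) + Ω ((K S').index) := by
        rw [← hmul, cardFactors_mul (hrel0 _ _) (hι0 S')]
      rw [this]
      have := ih S' hS'
      have := hΩpos _ (hrel0 (K S) (K S')) hr1
      omega
  -- n is at least 1
  have hn1 : 1 ≤ n := by
    by_contra h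
    have hn0 : n = 0 := by omega
    have hue : (Set.univ : Set (Fin n)) = ∅ := by
      subst hn0
      ext j
      exact absurd j.2 (by omega)
    have : (⊤ : Subgroup G) = H := by rw [← hKuniv, hue, hKempty]
    have h1 : H.index = 1 := by rw [← this, Subgroup.index_top]
    rw [hind, hn0] at h1
    simp at h1
    exact hq.one_lt.ne' h1
  have hΩind : Ω H.index = n := by
    rw [hind, cardFactors_mul (pow_ne_zero _ hp.pos.ne') hq.pos.ne',
      cardFactors_apply_prime_pow hp, cardFactors_apply_prime hq]
    omega
  have hcompl_card : ∀ S : Set (Fin n), S.ncard + Sᶜ.ncard = n := by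
    intro S
    have := Set.ncard_add_ncard_compl S
    simpa using this
  have hΩρ : ∀ S : Set (Fin n), Ω (ρ S) = S.ncard := by
    intro S
    have h1 := omega_rho S.ncard S rfl
    have h2 := omega_iota Sᶜ.ncard S rfl
    have h3 : Ω (ρ S) + Ω ((K S).index) = n := by
      rw [← cardFactors_mul (hρ0 S) (hι0 S), hρι S, hΩind]
    have := hcompl_card S
    omega
  -- divisibility
  have hρdvd : ∀ S, ρ S ∣ p ^ (n - 1) * q := by
    intro S
    rw [← hind]
    exact Dvd.intro _ (hρι S)
  -- classification of ρ S, and the master disjunction + coatom index characterization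
  obtain ⟨M, hForm, hIdx⟩ :
      ∃ M : Set (Fin n),
        (∀ S : Set (Fin n),
          (M ⊆ S ∧ (K S).index * p ^ S.ncard = p ^ n) ∨
          (¬ M ⊆ S ∧ (K S).index * p ^ S.ncard * p = p ^ n * q)) ∧
        (∀ i : Fin n, ((K ({i}ᶜ)).index = q ↔ i ∈ M)) := by
    have hpowsucc : ∀ a : ℕ, 1 ≤ a → p ^ (a - 1) * p = p ^ a := by
      intro a ha
      rw [← pow_succ]
      congr 1
      omega
    have hcard_cs : ∀ i : Fin n, ({i}ᶜ : Set (Fin n)).ncard = n - 1 := by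
      intro i
      have h1 := hcompl_card {i}
      have h2 : ({i} : Set (Fin n)).ncard = 1 := Set.ncard_singleton i
      omega
    -- classification of relative indices
    have hρ_pow : ∀ S : Set (Fin n), ¬ q ∣ ρ S → ρ S = p ^ S.ncard := by
      intro S hS
      have hco : Nat.Coprime q (ρ S) := (Nat.Prime.coprime_iff_not_dvd hq).mpr hS
      have hdvd : ρ S ∣ p ^ (n - 1) := by
        have := hρdvd S
        exact (Nat.Coprime.dvd_of_dvd_mul_right hco.symm) this
      obtain ⟨j, hj, hjeq⟩ := (Nat.dvd_prime_pow hp).mp hdvd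
      have : Ω (ρ S) = j := by rw [hjeq, cardFactors_apply_prime_pow hp]
      rw [hjeq, ← this, hΩρ S]
    have hρ_powq : ∀ S : Set (Fin n), q ∣ ρ S →
        ρ S = p ^ (S.ncard - 1) * q ∧ 1 ≤ S.ncard := by
      intro S hS
      obtain ⟨t, ht⟩ := hS
      have htd : t ∣ p ^ (n - 1) := by
        have h1 : q * t ∣ q * p ^ (n - 1) := by
          rw [← ht, mul_comm q (p ^ (n-1))]
          exact hρdvd S
        exact (mul_dvd_mul_iff_left hq.pos.ne').mp h1
      obtain ⟨j, hj, hjeq⟩ := (Nat.dvd_prime_pow hp).mp htd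
      have ht0 : t ≠ 0 := by
        intro h0
        exact hρ0 S (by rw [ht, h0, mul_zero])
      have hΩS : Ω (ρ S) = 1 + j := by
        rw [ht, cardFactors_mul hq.pos.ne' ht0, cardFactors_apply_prime hq, hjeq,
          cardFactors_apply_prime_pow hp]
      rw [hΩρ S] at hΩS
      constructor
      · rw [ht, hjeq, mul_comm]
        congr 2
        omega
      · omega
    -- the two formula branches, given divisibility info
    have hbranch1 : ∀ S : Set (Fin n), q ∣ ρ S → (K S).index * p ^ S.ncard = p ^ n := by
      intro S hS
      obtain ⟨hρS, hS1⟩ := hρ_powq S hS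
      have h1 : p ^ (S.ncard - 1) * q * (K S).index = p ^ (n - 1) * q := by
        rw [← hρS, hρι S, hind]
      have h2 : q * (p ^ (S.ncard - 1) * (K S).index) = q * p ^ (n - 1) := by
        ring_nf
        ring_nf at h1
        linarith [h1]
      have h3 : p ^ (S.ncard - 1) * (K S).index = p ^ (n - 1) :=
        Nat.eq_of_mul_eq_mul_left hq.pos h2
      have h4 : p ^ (S.ncard - 1) * (K S).index * p = p ^ (n - 1) * p := by rw [h3]
      calc (K S).index * p ^ S.ncard = p ^ (S.ncard - 1) * (K S).index * p := by
            rw [← hpowsucc S.ncard hS1]; ring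
        _ = p ^ (n - 1) * p := h4
        _ = p ^ n := hpowsucc n hn1
    have hbranch2 : ∀ S : Set (Fin n), ¬ q ∣ ρ S →
        (K S).index * p ^ S.ncard * p = p ^ n * q := by
      intro S hS
      have hρS := hρ_pow S hS
      have h1 : p ^ S.ncard * (K S).index = p ^ (n - 1) * q := by
        rw [← hρS, hρι S, hind]
      calc (K S).index * p ^ S.ncard * p = p ^ S.ncard * (K S).index * p := by ring
        _ = p ^ (n - 1) * q * p := by rw [h1]
        _ = (p ^ (n - 1) * p) * q := by ring
        _ = p ^ n * q := by rw [hpowsucc n hn1]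
    by_cases hpq' : p = q
    · -- p = q : take M = univ
      have hall : ∀ S : Set (Fin n), (K S).index * p ^ S.ncard = p ^ n := by
        intro S
        by_cases hS : q ∣ ρ S
        · exact hbranch1 S hS
        · have h2 := hbranch2 S hS
          rw [← hpq'] at h2
          have h3 : ((K S).index * p ^ S.ncard) * p = p ^ n * p := h2
          exact Nat.eq_of_mul_eq_mul_right hp.pos h3
      refine ⟨Set.univ, fun S => ?_, fun i => ?_⟩
      · by_cases hS : Set.univ ⊆ S
        · exact Or.inl ⟨hS, hall S⟩
        · refine Or.inr ⟨hS, ?_⟩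
          rw [hall S, ← hpq']
      · constructor
        · intro _; trivial
        · intro _
          have h1 := hall {i}ᶜ
          rw [hcard_cs i] at h1
          have h2 : (K {i}ᶜ).index * p ^ (n - 1) = p * p ^ (n - 1) := by
            rw [h1, mul_comm p (p ^ (n-1)), hpowsucc n hn1]
          have := Nat.eq_of_mul_eq_mul_right (pow_pos hp.pos (n - 1)) h2
          rw [this, hpq']
    · -- p < q
      have hplt : p < q := lt_of_le_of_ne hpq hpq'
      -- q-divisibility is upward closed
      have hup : ∀ S T : Set (Fin n), S ⊆ T → q ∣ ρ S → q ∣ ρ T := by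
        intro S T hST hq1
        have : ρ S * (K S).relIndex (K T) = ρ T :=
          Subgroup.relIndex_mul_relIndex H (K S) (K T) (hKle S) (hKmono hST)
        exact this ▸ hq1.mul_right _
      -- lattice structure
      have hKinf : ∀ S T : Set (Fin n), K (S ∩ T) = K S ⊓ K T := by
        intro S T
        have h1 : e.symm (S ⊓ T) = e.symm S ⊓ e.symm T := e.symm.map_inf S T
        show (e.symm (S ∩ T)).1 = _
        rw [show S ∩ T = S ⊓ T from rfl, h1]
        rfl
      have hKsup : ∀ S T : Set (Fin n), K (S ∪ T) = K S ⊔ K T := by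
        intro S T
        have h1 : e.symm (S ⊔ T) = e.symm S ⊔ e.symm T := e.symm.map_sup S T
        show (e.symm (S ∪ T)).1 = _
        rw [show S ∪ T = S ⊔ T from rfl, h1]
        rfl
      -- q-divisibility is closed under intersections
      have hmeet : ∀ S T : Set (Fin n), q ∣ ρ S → q ∣ ρ T → q ∣ ρ (S ∩ T) := by
        intro S T hqS hqT
        by_contra hnot
        have hnST : ¬ S ⊆ T := by
          intro h
          rw [Set.inter_eq_left.mpr h] at hnot
          exact hnot hqS
        have hsub : S ∩ T ⊂ S := ⟨Set.inter_subset_left, fun h => hnST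
          (fun x hx => (h hx).2)⟩
        have hu_lt : (S ∩ T).ncard < S.ncard := Set.ncard_lt_ncard hsub (Set.toFinite S)
        obtain ⟨hρS, hS1⟩ := hρ_powq S hqS
        obtain ⟨hρT, hT1⟩ := hρ_powq T hqT
        have hρST := hρ_pow (S ∩ T) hnot
        have hqU : q ∣ ρ (S ∪ T) := hup S (S ∪ T) Set.subset_union_left hqS
        obtain ⟨hρU, _⟩ := hρ_powq (S ∪ T) hqU
        -- relative index from S ∩ T to S
        set a := (K (S ∩ T)).relIndex (K S) with ha
        have hmula : ρ (S ∩ T) * a = ρ S :=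
          Subgroup.relIndex_mul_relIndex H _ _ (hKle _) (hKmono Set.inter_subset_left)
        -- relative index from T to S ∪ T
        set b := (K T).relIndex (K (S ∪ T)) with hb
        have hmulb : ρ T * b = ρ (S ∪ T) :=
          Subgroup.relIndex_mul_relIndex H _ _ (hKle _) (hKmono Set.subset_union_right)
        -- cardinal bookkeeping
        have hcards : (S ∪ T).ncard + (S ∩ T).ncard = S.ncard + T.ncard :=
          Set.ncard_union_add_ncard_inter S T (Set.toFinite S) (Set.toFinite T)
        have hTleU : T.ncard ≤ (S ∪ T).ncard :=
          Set.ncard_le_ncard Set.subset_union_right (Set.toFinite _)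
        -- compute a
        have haval : a = p ^ (S.ncard - 1 - (S ∩ T).ncard) * q := by
          have h1 : p ^ (S ∩ T).ncard * a = p ^ (S.ncard - 1) * q := by
            rw [← hρST, hmula, hρS]
          have h2 : p ^ (S.ncard - 1) = p ^ (S ∩ T).ncard * p ^ (S.ncard - 1 - (S ∩ T).ncard) := by
            rw [← pow_add]
            congr 1
            omega
          rw [h2, mul_assoc] at h1
          exact Nat.eq_of_mul_eq_mul_left (pow_pos hp.pos _) h1
        -- compute b
        have hbval : b = p ^ ((S ∪ T).ncard - T.ncard) := by
          have h1 : p ^ (T.ncard - 1) * q * b = p ^ ((S ∪ T).ncard - 1) * q := by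
            rw [← hρT, hmulb, hρU]
          have h2 : q * (p ^ (T.ncard - 1) * b) = q * p ^ ((S ∪ T).ncard - 1) := by
            ring_nf
            ring_nf at h1
            linarith [h1]
          have h3 : p ^ (T.ncard - 1) * b = p ^ ((S ∪ T).ncard - 1) :=
            Nat.eq_of_mul_eq_mul_left hq.pos h2
          have h4 : p ^ ((S ∪ T).ncard - 1)
              = p ^ (T.ncard - 1) * p ^ ((S ∪ T).ncard - T.ncard) := by
            rw [← pow_add]
            congr 1
            omega
          rw [h4] at h3
          exact Nat.eq_of_mul_eq_mul_left (pow_pos hp.pos _) h3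
        -- the key inequality a ≤ b
        have hkey : a ≤ b := by
          rw [ha, hb, hKinf S T, hKsup S T, inf_comm, Subgroup.inf_relIndex_right]
          exact Subgroup.relIndex_le_of_le_right le_sup_left Subgroup.index_ne_zero_of_finite
        rw [haval, hbval] at hkey
        have hexp : (S ∪ T).ncard - T.ncard = (S.ncard - 1 - (S ∩ T).ncard) + 1 := by omega
        rw [hexp, pow_succ] at hkey
        have : q ≤ p := Nat.le_of_mul_le_mul_left hkey (pow_pos hp.pos _)
        omega
      -- minimal q-divisible set
      have hFuniv : q ∣ ρ Set.univ := by
        have : ρ Set.univ = H.index := by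
          rw [hρ]
          simp only [hKuniv]
          exact Subgroup.relIndex_top_right H
        rw [this, hind]
        exact ⟨p ^ (n - 1), by ring⟩
      obtain ⟨M, hMF, hMmin⟩ := Set.exists_min_image {S : Set (Fin n) | q ∣ ρ S} Set.ncard
        (Set.toFinite _) ⟨Set.univ, hFuniv⟩
      have hMle : ∀ S : Set (Fin n), q ∣ ρ S → M ⊆ S := by
        intro S hS
        have h1 : q ∣ ρ (M ∩ S) := hmeet M S hMF hS
        have h2 : M.ncard ≤ (M ∩ S).ncard := hMmin (M ∩ S) h1
        have h3 : M ∩ S = M := Set.eq_of_subset_of_ncard_le Set.inter_subset_left h2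
          (Set.toFinite _)
        exact Set.inter_eq_left.mp h3
      refine ⟨M, fun S => ?_, fun i => ?_⟩
      · by_cases hMS : M ⊆ S
        · exact Or.inl ⟨hMS, hbranch1 S (hup M S hMS hMF)⟩
        · refine Or.inr ⟨hMS, hbranch2 S ?_⟩
          intro hdvd
          exact hMS (hMle S hdvd)
      · constructor
        · intro hqi
          by_cases hdvd : q ∣ ρ {i}ᶜ
          · -- then index would be p, contradiction with p ≠ q
            exfalso
            have h1 := hbranch1 {i}ᶜ hdvd
            rw [hqi, hcard_cs i] at h1
            have h2 : q * p ^ (n - 1) = p * p ^ (n - 1) := by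
              rw [h1, mul_comm p (p ^ (n - 1)), hpowsucc n hn1]
            have := Nat.eq_of_mul_eq_mul_right (pow_pos hp.pos (n - 1)) h2
            omega
          · have hnsub : ¬ M ⊆ {i}ᶜ := fun h => hdvd (hup M {i}ᶜ h hMF)
            obtain ⟨j, hj1, hj2⟩ := Set.not_subset.mp hnsub
            simp only [Set.mem_compl_iff, Set.mem_singleton_iff, not_not] at hj2
            rwa [← hj2]
        · intro hiM
          have hnsub : ¬ M ⊆ {i}ᶜ := by
            intro h
            exact (h hiM) rfl
          have h1 := hbranch2 {i}ᶜ (fun hdvd => hnsub (hMle _ hdvd))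
          rw [hcard_cs i] at h1
          have h2 : (K {i}ᶜ).index * (p ^ (n - 1) * p) = (p ^ (n - 1) * p) * q := by
            rw [← mul_assoc, h1, hpowsucc n hn1]
          rw [hpowsucc n hn1] at h2
          have h3 : (K {i}ᶜ).index * p ^ n = q * p ^ n := by rw [h2]; ring
          exact Nat.eq_of_mul_eq_mul_right (pow_pos hp.pos n) h3
  -- coatom correspondence
  have hcoatom1 : ∀ i : Fin n, IsCoatom (K ({i}ᶜ)) := by
    intro i
    constructor
    · intro htop
      rw [← hKuniv] at htop
      have h1 := hKinj htop
      have h2 : i ∈ ({i}ᶜ : Set (Fin n)) := h1 ▸ Set.mem_univ i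
      exact h2 rfl
    · intro X hX
      have hHX : H ≤ X := le_trans (hKle _) hX.le
      set S : Set (Fin n) := e ⟨X, hHX, le_top⟩ with hS
      have hXS : K S = X := congrArg Subtype.val (e.symm_apply_apply ⟨X, hHX, le_top⟩)
      rw [← hXS] at hX
      have hss : {i}ᶜ ⊆ S := hKle_iff.mp hX.le
      have hne : ({i}ᶜ : Set (Fin n)) ≠ S := fun h => hX.ne (congrArg K h)
      have hSuniv : S = Set.univ := by
        ext j
        simp only [Set.mem_univ, iff_true]
        by_cases hj : j = i
        · subst hj
          by_contra hjS
          apply hne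
          exact subset_antisymm hss (fun x hx => by
            simp only [Set.mem_compl_iff, Set.mem_singleton_iff]
            intro hxj
            exact hjS (hxj ▸ hx))
        · exact hss (by simpa using hj)
      rw [← hXS, hSuniv, hKuniv]
  have hcoatom2 : ∀ L : Subgroup G, H ≤ L → IsCoatom L → ∃ i : Fin n, L = K ({i}ᶜ) := by
    intro L hHL hcoat
    set S : Set (Fin n) := e ⟨L, hHL, le_top⟩ with hS
    have hLS : K S = L := congrArg Subtype.val (e.symm_apply_apply ⟨L, hHL, le_top⟩)
    have hSne : S ≠ Set.univ := by
      intro h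
      apply hcoat.1
      rw [← hLS, h, hKuniv]
    have hex : ∃ i, i ∉ S := by
      by_contra h
      push_neg at h
      exact hSne (Set.eq_univ_iff_forall.mpr h)
    obtain ⟨i, hi⟩ := hex
    refine ⟨i, ?_⟩
    have hsub : S ⊆ {i}ᶜ := by
      intro j hj
      simp only [Set.mem_compl_iff, Set.mem_singleton_iff]
      rintro rfl
      exact hi hj
    have hsup : {i}ᶜ ⊆ S := by
      intro j hj
      by_contra hjS
      have h1 : K S < K (insert j S) := by
        refine lt_of_le_of_ne (hKmono (Set.subset_insert j S)) (fun hEq => hjS ?_)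
        have := hKinj hEq
        rw [this]
        exact Set.mem_insert j S
      have h2 := hcoat.2 _ (hLS ▸ h1)
      have h3 : insert j S = Set.univ := hKinj (by rw [h2, hKuniv])
      have h4 : i ∈ insert j S := h3 ▸ Set.mem_univ i
      rcases h4 with h4 | h4
      · exact hj (h4 ▸ rfl)
      · exact hi h4
    rw [← hLS, subset_antisymm hsub hsup]
  have hCset : {L : Subgroup G | H ≤ L ∧ IsCoatom L ∧ L.index = q}
      = (fun i : Fin n => K ({i}ᶜ)) '' M := by
    ext L
    simp only [Set.mem_setOf_eq, Set.mem_image]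
    constructor
    · rintro ⟨h1, h2, h3⟩
      obtain ⟨i, rfl⟩ := hcoatom2 L h1 h2
      exact ⟨i, (hIdx i).mp h3, rfl⟩
    · rintro ⟨i, hiM, rfl⟩
      exact ⟨hKle _, hcoatom1 i, (hIdx i).mpr hiM⟩
  have hinj : Function.Injective (fun i : Fin n => K ({i}ᶜ)) := by
    intro i j h
    have h1 := hKinj h
    have h2 : ({i} : Set (Fin n)) = {j} := compl_inj_iff.mp h1
    exact Set.singleton_eq_singleton_iff.mp h2
  refine ⟨M, hForm, ?_⟩
  rw [hCset]
  exact Set.ncard_image_of_injective M hinj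

private lemma detRatId (pq qq A B s : ℚ) (hp : pq ≠ 0) (hB : B ≠ 0) (hs : s * s = 1) :
    (qq/pq) * (A*B) + (1 - qq/pq) * (s * A)
      = (A*B) * (1 + ((qq - pq)/pq) * (1 - 1/(s*B))) := by
  have hsne : s ≠ 0 := fun h => by simp [h] at hs
  field_simp
  ring_nf
  linear_combination (A*pq - A*qq) * hs

/-- A boolean interval of rank `n` and index `p^{n-1} q` (`p ≤ q` primes), with `m`
coatoms of index `q`, has dual Euler totient
`(p-1)^n · [1 + ((q-p)/p)(1 - 1/(1-p)^m)] ≥ (p-1)^n > 0`. -/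
theorem dual_euler_totient_p_pow_q {G : Type*} [Group G] [Finite G]
    (H : Subgroup G) (n p q m : ℕ) (hp : p.Prime) (hq : q.Prime) (hpq : p ≤ q)
    (e : (Set.Icc H (⊤ : Subgroup G)) ≃o Set (Fin n))
    (hind : H.index = p ^ (n - 1) * q)
    (hm : m = {L : Subgroup G | H ≤ L ∧ IsCoatom L ∧ L.index = q}.ncard) :
    (dualEulerTotient H e : ℚ) =
      ((p : ℚ) - 1) ^ n * (1 + (((q : ℚ) - p) / p) * (1 - 1 / (1 - (p : ℚ)) ^ m)) ∧
    ((p : ℤ) - 1) ^ n ≤ dualEulerTotient H e ∧ 0 < dualEulerTotient H e := by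
  classical
  obtain ⟨M, hForm, hCard⟩ := detAux H hp hq hpq e hind
  have hmM : m = M.ncard := by rw [hm, hCard]
  set Mf : Finset (Fin n) := (Set.toFinite M).toFinset with hMfdef
  have hMfcoe : (Mf : Set (Fin n)) = M := (Set.toFinite M).coe_toFinset
  have hmc : m = Mf.card := by
    rw [hmM, ← Set.ncard_coe_finset Mf, hMfcoe]
  have hmn : m ≤ n := by
    rw [hmc]
    calc Mf.card ≤ (Finset.univ : Finset (Fin n)).card :=
          Finset.card_le_card (Finset.subset_univ _)
      _ = n := by simp
  have hp0 : (p:ℚ) ≠ 0 := by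
    have := hp.pos
    positivity
  have hp2 : (2:ℚ) ≤ (p:ℚ) := by exact_mod_cast hp.two_le
  have hq2 : (p:ℚ) ≤ (q:ℚ) := by exact_mod_cast hpq
  haveI : Fintype ↥(Set.Icc H (⊤ : Subgroup G)) := Fintype.ofFinite _
  -- rewrite the finsum as a sum over finsets of `Fin n`
  have hsum1 : dualEulerTotient H e
      = ∑ t : Finset (Fin n),
          (-1:ℤ)^t.card * ((e.symm (↑t : Set (Fin n))).1.index : ℤ) := by
    rw [dualEulerTotient, finsum_eq_sum_of_fintype]
    refine (Fintype.sum_equiv ((Fintype.finsetEquivSet (α := Fin n)).trans e.symm.toEquiv)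
      _ _ (fun t => ?_)).symm
    simp only [Equiv.trans_apply, Fintype.finsetEquivSet_apply, RelIso.coe_fn_toEquiv]
    rw [OrderIso.apply_symm_apply, Set.ncard_coe_finset]
  have hcast : (dualEulerTotient H e : ℚ)
      = ∑ t : Finset (Fin n),
          (-1:ℚ)^t.card * ((e.symm (↑t : Set (Fin n))).1.index : ℚ) := by
    rw [hsum1]
    push_cast
    rfl
  -- pointwise evaluation of the indices
  have hval : ∀ t : Finset (Fin n),
      ((e.symm (↑t : Set (Fin n))).1.index : ℚ)
        = ((q:ℚ)/p) * (p:ℚ)^((Finset.univ \ t).card)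
          + (if Mf ⊆ t then (1 - (q:ℚ)/p) * (p:ℚ)^((Finset.univ \ t).card) else 0) := by
    intro t
    have hcards : t.card + (Finset.univ \ t).card = n := by
      rw [Finset.card_sdiff_of_subset (Finset.subset_univ t)]
      have h1 : t.card ≤ (Finset.univ : Finset (Fin n)).card :=
        Finset.card_le_card (Finset.subset_univ _)
      have h2 : (Finset.univ : Finset (Fin n)).card = n := by simp
      omega
    have hMft : Mf ⊆ t ↔ M ⊆ (↑t : Set (Fin n)) := by
      rw [← hMfcoe]
      exact ⟨fun h => Finset.coe_subset.mpr h, fun h => Finset.coe_subset.mp h⟩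
    have hpow : (p:ℚ)^n = (p:ℚ)^t.card * (p:ℚ)^((Finset.univ \ t).card) := by
      rw [← pow_add, hcards]
    rcases hForm ↑t with ⟨hMS, heq⟩ | ⟨hMS, heq⟩
    · rw [if_pos (hMft.mpr hMS)]
      rw [Set.ncard_coe_finset] at heq
      have h2 : ((e.symm (↑t : Set (Fin n))).1.index : ℚ) * (p:ℚ)^t.card = (p:ℚ)^n := by
        exact_mod_cast congrArg (Nat.cast : ℕ → ℚ) heq
      rw [hpow] at h2
      have h3 : ((e.symm (↑t : Set (Fin n))).1.index : ℚ)
          = (p:ℚ)^((Finset.univ \ t).card) :=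
        mul_right_cancel₀ (pow_ne_zero t.card hp0)
          (by linear_combination h2)
      rw [h3]
      ring
    · rw [if_neg (fun h => hMS (hMft.mp h)), add_zero]
      rw [Set.ncard_coe_finset] at heq
      have h2 : ((e.symm (↑t : Set (Fin n))).1.index : ℚ) * (p:ℚ)^t.card * p
          = (p:ℚ)^n * q := by
        exact_mod_cast congrArg (Nat.cast : ℕ → ℚ) heq
      rw [hpow] at h2
      have h3 : ((e.symm (↑t : Set (Fin n))).1.index : ℚ) * p
          = (q:ℚ) * (p:ℚ)^((Finset.univ \ t).card) :=
        mul_right_cancel₀ (pow_ne_zero t.card hp0) (by linear_combination h2)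
      rw [div_mul_eq_mul_div, eq_div_iff hp0]
      linear_combination h3
  -- the binomial-type sums
  have hbase : ∀ s : Finset (Fin n),
      ∑ t ∈ s.powerset, (-1:ℚ)^t.card * (p:ℚ)^((s \ t).card) = ((p:ℚ) - 1)^s.card := by
    intro s
    have h := Finset.prod_add (fun _ : Fin n => (-1:ℚ)) (fun _ => (p:ℚ)) s
    simp only [Finset.prod_const] at h
    rw [← h]
    ring_nf
  have hsplit : (dualEulerTotient H e : ℚ)
      = ((q:ℚ)/p) * (∑ t : Finset (Fin n), (-1:ℚ)^t.card * (p:ℚ)^((Finset.univ \ t).card))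
        + ∑ t : Finset (Fin n), (if Mf ⊆ t then
            (-1:ℚ)^t.card * ((1 - (q:ℚ)/p) * (p:ℚ)^((Finset.univ \ t).card)) else 0) := by
    rw [hcast, Finset.mul_sum, ← Finset.sum_add_distrib]
    apply Finset.sum_congr rfl
    intro t _
    rw [hval t]
    by_cases h : Mf ⊆ t
    · rw [if_pos h, if_pos h]
      ring
    · rw [if_neg h, if_neg h]
      ring
  have hS1 : ∑ t : Finset (Fin n), (-1:ℚ)^t.card * (p:ℚ)^((Finset.univ \ t).card)
      = ((p:ℚ)-1)^n := by
    have h := hbase Finset.univ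
    rw [Finset.powerset_univ] at h
    rw [h]
    simp
  have hS2 : ∑ t : Finset (Fin n), (if Mf ⊆ t then
        (-1:ℚ)^t.card * ((1 - (q:ℚ)/p) * (p:ℚ)^((Finset.univ \ t).card)) else 0)
      = (1 - (q:ℚ)/p) * ((-1:ℚ)^m * ((p:ℚ)-1)^(n - m)) := by
    rw [← Finset.sum_filter]
    have hre : ∑ t ∈ Finset.univ.filter (fun t => Mf ⊆ t),
          (-1:ℚ)^t.card * ((1 - (q:ℚ)/p) * (p:ℚ)^((Finset.univ \ t).card))
        = ∑ u ∈ (Finset.univ \ Mf).powerset,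
            (-1:ℚ)^(u.card + m) * ((1 - (q:ℚ)/p) * (p:ℚ)^(((Finset.univ \ Mf) \ u).card)) := by
      refine Finset.sum_nbij' (fun t => t \ Mf) (fun u => u ∪ Mf) ?_ ?_ ?_ ?_ ?_
      · intro t ht
        rw [Finset.mem_powerset]
        intro a ha
        rw [Finset.mem_sdiff] at ha ⊢
        exact ⟨Finset.mem_univ a, ha.2⟩
      · intro u hu
        rw [Finset.mem_filter]
        exact ⟨Finset.mem_univ _, Finset.subset_union_right⟩
      · intro t ht
        rw [Finset.mem_filter] at ht
        exact Finset.sdiff_union_of_subset ht.2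
      · intro u hu
        rw [Finset.mem_powerset] at hu
        ext a
        simp only [Finset.mem_sdiff, Finset.mem_union]
        constructor
        · rintro ⟨h1 | h1, h2⟩
          · exact h1
          · exact absurd h1 h2
        · intro ha
          have := hu ha
          rw [Finset.mem_sdiff] at this
          exact ⟨Or.inl ha, this.2⟩
      · intro t ht
        rw [Finset.mem_filter] at ht
        have hsub := ht.2
        have hc : t.card = (t \ Mf).card + m := by
          rw [Finset.card_sdiff_of_subset hsub, hmc]
          have := Finset.card_le_card hsub
          omega
        have hset : Finset.univ \ t = (Finset.univ \ Mf) \ (t \ Mf) := by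
          ext a
          simp only [Finset.mem_sdiff, Finset.mem_univ, true_and]
          by_cases haM : a ∈ Mf
          · simp [haM, hsub haM]
          · by_cases hat : a ∈ t <;> simp [haM, hat]
        rw [hc, hset]
    rw [hre]
    have hcardMf : (Finset.univ \ Mf).card = n - m := by
      rw [Finset.card_sdiff_of_subset (Finset.subset_univ Mf), ← hmc]
      simp
    calc ∑ u ∈ (Finset.univ \ Mf).powerset,
          (-1:ℚ)^(u.card + m) * ((1 - (q:ℚ)/p) * (p:ℚ)^(((Finset.univ \ Mf) \ u).card))
        = (1 - (q:ℚ)/p) * ((-1:ℚ)^m * ∑ u ∈ (Finset.univ \ Mf).powerset,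
            (-1:ℚ)^u.card * (p:ℚ)^(((Finset.univ \ Mf) \ u).card)) := by
          rw [Finset.mul_sum, Finset.mul_sum]
          apply Finset.sum_congr rfl
          intro u _
          rw [pow_add]
          ring
      _ = (1 - (q:ℚ)/p) * ((-1:ℚ)^m * ((p:ℚ)-1)^(n - m)) := by
          rw [hbase (Finset.univ \ Mf), hcardMf]
  have hE : (dualEulerTotient H e : ℚ)
      = ((q:ℚ)/p) * (((p:ℚ)-1)^n)
        + (1 - (q:ℚ)/p) * ((-1:ℚ)^m * ((p:ℚ)-1)^(n - m)) := by
    rw [hsplit, hS1, hS2]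
  -- the closed form
  set a : ℚ := (p:ℚ) - 1 with hadef
  have ha1 : (1:ℚ) ≤ a := by rw [hadef]; linarith
  have hane : a ≠ 0 := by linarith
  set A : ℚ := a^(n - m) with hAdef
  set B : ℚ := a^m with hBdef
  set s : ℚ := (-1:ℚ)^m with hsdef
  have hss : s * s = 1 := by
    rw [hsdef, ← pow_add]
    exact Even.neg_one_pow ⟨m, rfl⟩
  have hBne : B ≠ 0 := pow_ne_zero m hane
  have hAB : ((p:ℚ)-1)^n = A * B := by
    rw [hAdef, hBdef, ← pow_add, ← hadef]
    congr 1
    omega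
  have hE2 : (dualEulerTotient H e : ℚ) = ((q:ℚ)/p) * (A*B) + (1 - (q:ℚ)/p) * (s * A) := by
    rw [hE, hAB]
  have hnegp : (1 - (p:ℚ))^m = s * B := by
    rw [hsdef, hBdef, ← mul_pow]
    congr 1
    rw [hadef]
    ring
  constructor
  · rw [hE2, hAB, hnegp]
    exact detRatId (p:ℚ) (q:ℚ) A B s hp0 hBne hss
  -- inequalities
  have hA1 : (1:ℚ) ≤ A := one_le_pow₀ ha1
  have hB1 : (1:ℚ) ≤ B := one_le_pow₀ ha1
  have hs1 : s ≤ 1 := by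
    rw [hsdef]
    rcases Nat.even_or_odd m with hm' | hm'
    · rw [hm'.neg_one_pow]
    · rw [hm'.neg_one_pow]
      norm_num
  have hqp1 : (1:ℚ) ≤ (q:ℚ)/p := by
    rw [le_div_iff₀ (by linarith)]
    linarith
  have hineq : ((p:ℚ)-1)^n ≤ (dualEulerTotient H e : ℚ) := by
    rw [hE2, hAB]
    have hfac : 0 ≤ ((q:ℚ)/p - 1) * (A*B - s*A) := by
      apply mul_nonneg (by linarith)
      have : s * A ≤ A * B := by nlinarith
      linarith
    nlinarith
  have hipos : (0:ℤ) < ((p:ℤ) - 1)^n := by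
    apply pow_pos
    have := hp.two_le
    omega
  have hile : ((p:ℤ) - 1)^n ≤ dualEulerTotient H e := by
    have h1 : ((((p:ℤ) - 1)^n : ℤ) : ℚ) ≤ ((dualEulerTotient H e : ℤ) : ℚ) := by
      push_cast
      convert hineq using 2
    exact_mod_cast h1
  exact ⟨hile, lt_of_lt_of_le hipos hile⟩
end

section
/- Let [H,G] be a boolean interval of finite groups such that for every atom A and every K ∈ [H, A^∁] one has |⟨K, A⟩ : K| = |A : H|. Then the dual Euler totient satisfies φ̂(H,G) = ∏_{i=1}^n (|A_i : H| - 1) > 0, where A_1, ..., A_n are the atoms of [H,G]. -/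
section Aux
variable {G : Type*} [Group G] {H : Subgroup G} {n : ℕ}
  (e : (Set.Icc H (⊤ : Subgroup G)) ≃o Set (Fin n))

lemma esymm_bot : ((e.symm ∅ : Set.Icc H (⊤ : Subgroup G)) : Subgroup G) = H := by
  apply le_antisymm
  · have h1 : (∅ : Set (Fin n)) ⊆ e ⟨H, ⟨le_rfl, le_top⟩⟩ := Set.empty_subset _
    have h2 := e.symm.monotone h1
    rw [e.symm_apply_apply] at h2
    exact h2
  · exact (e.symm ∅).2.1

lemma esymm_univ : ((e.symm Set.univ : Set.Icc H (⊤ : Subgroup G)) : Subgroup G) = ⊤ := by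
  apply le_antisymm le_top
  have h1 : e ⟨⊤, ⟨le_top, le_rfl⟩⟩ ⊆ Set.univ := Set.subset_univ _
  have h2 := e.symm.monotone h1
  rw [e.symm_apply_apply] at h2
  exact h2

lemma esymm_sup (S T : Set (Fin n)) :
    ((e.symm (S ∪ T) : Set.Icc H (⊤ : Subgroup G)) : Subgroup G) =
      (e.symm S : Subgroup G) ⊔ (e.symm T : Subgroup G) := by
  apply le_antisymm
  · set W : Set.Icc H (⊤ : Subgroup G) :=
      ⟨(e.symm S : Subgroup G) ⊔ (e.symm T : Subgroup G),
        ⟨le_trans (e.symm S).2.1 le_sup_left, le_top⟩⟩ with hW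
    have h1 : e.symm S ≤ W := Subtype.coe_le_coe.1 le_sup_left
    have h2 : e.symm T ≤ W := Subtype.coe_le_coe.1 le_sup_right
    have h1' : S ⊆ e W := by
      have := e.monotone h1; rwa [e.apply_symm_apply] at this
    have h2' : T ⊆ e W := by
      have := e.monotone h2; rwa [e.apply_symm_apply] at this
    have h3 : S ∪ T ⊆ e W := Set.union_subset h1' h2'
    have h4 := e.symm.monotone h3
    rw [e.symm_apply_apply] at h4
    exact h4
  · exact sup_le (e.symm.monotone Set.subset_union_left)
      (e.symm.monotone Set.subset_union_right)

lemma esymm_inf (S T : Set (Fin n)) :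
    ((e.symm (S ∩ T) : Set.Icc H (⊤ : Subgroup G)) : Subgroup G) =
      (e.symm S : Subgroup G) ⊓ (e.symm T : Subgroup G) := by
  apply le_antisymm
  · exact le_inf (e.symm.monotone Set.inter_subset_left)
      (e.symm.monotone Set.inter_subset_right)
  · set W : Set.Icc H (⊤ : Subgroup G) :=
      ⟨(e.symm S : Subgroup G) ⊓ (e.symm T : Subgroup G),
        ⟨le_inf (e.symm S).2.1 (e.symm T).2.1, le_top⟩⟩ with hW
    have h1 : W ≤ e.symm S := Subtype.coe_le_coe.1 inf_le_left
    have h2 : W ≤ e.symm T := Subtype.coe_le_coe.1 inf_le_right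
    have h1' : e W ⊆ S := by
      have := e.monotone h1; rwa [e.apply_symm_apply] at this
    have h2' : e W ⊆ T := by
      have := e.monotone h2; rwa [e.apply_symm_apply] at this
    have h3 : e W ⊆ S ∩ T := Set.subset_inter h1' h2'
    have h4 := e.symm.monotone h3
    rw [e.symm_apply_apply] at h4
    exact h4

lemma esymm_ne_bot {S : Set (Fin n)} (hS : S.Nonempty) :
    H < ((e.symm S : Set.Icc H (⊤ : Subgroup G)) : Subgroup G) := by
  refine lt_of_le_of_ne (e.symm S).2.1 ?_
  intro h
  have : (e.symm ∅ : Set.Icc H (⊤ : Subgroup G)) = e.symm S := by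
    apply Subtype.coe_injective
    show ((e.symm ∅ : Set.Icc H (⊤ : Subgroup G)) : Subgroup G) = _
    rw [esymm_bot e]
    exact h
  have h2 : (∅ : Set (Fin n)) = S := e.symm.injective this
  exact hS.ne_empty h2.symm

lemma esymm_atom (i : Fin n) :
    IsMinimalOvergroup H ((e.symm {i} : Set.Icc H (⊤ : Subgroup G)) : Subgroup G) := by
  constructor
  · exact esymm_ne_bot e ⟨i, rfl⟩
  · intro K' hlt hle
    have hmem : K' ∈ Set.Icc H (⊤ : Subgroup G) := ⟨le_of_lt hlt, le_top⟩
    have h1 : (⟨K', hmem⟩ : Set.Icc H (⊤ : Subgroup G)) ≤ e.symm {i} :=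
      Subtype.coe_le_coe.1 hle
    have h2 : e ⟨K', hmem⟩ ⊆ {i} := by
      have := e.monotone h1; rwa [e.apply_symm_apply] at this
    have hne : (e ⟨K', hmem⟩).Nonempty := by
      rcases Set.eq_empty_or_nonempty (e ⟨K', hmem⟩) with h | h
      · exfalso
        have : e.symm (e ⟨K', hmem⟩) = e.symm ∅ := by rw [h]
        rw [e.symm_apply_apply] at this
        have hKH : K' = ((e.symm ∅ : Set.Icc H (⊤ : Subgroup G)) : Subgroup G) :=
          congrArg Subtype.val this
        rw [esymm_bot e] at hKH
        exact absurd hKH.symm (ne_of_lt hlt)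
      · exact h
    have h3 : e ⟨K', hmem⟩ = {i} := by
      rcases hne with ⟨j, hj⟩
      have : j = i := h2 hj
      subst this
      exact Set.eq_singleton_iff_nonempty_unique_mem.2 ⟨⟨j, hj⟩, fun x hx => h2 hx⟩
    have : (⟨K', hmem⟩ : Set.Icc H (⊤ : Subgroup G)) = e.symm {i} := by
      rw [← h3, e.symm_apply_apply]
    exact congrArg Subtype.val this

lemma atom_range :
    {A : Subgroup G | IsMinimalOvergroup H A} =
      Set.range (fun i : Fin n => ((e.symm {i} : Set.Icc H (⊤ : Subgroup G)) : Subgroup G)) := by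
  ext A
  constructor
  · rintro ⟨hlt, hmin⟩
    have hmem : A ∈ Set.Icc H (⊤ : Subgroup G) := ⟨le_of_lt hlt, le_top⟩
    have hne : (e ⟨A, hmem⟩).Nonempty := by
      rcases Set.eq_empty_or_nonempty (e ⟨A, hmem⟩) with h | h
      · exfalso
        have : e.symm (e ⟨A, hmem⟩) = e.symm ∅ := by rw [h]
        rw [e.symm_apply_apply] at this
        have hKH : A = ((e.symm ∅ : Set.Icc H (⊤ : Subgroup G)) : Subgroup G) :=
          congrArg Subtype.val this
        rw [esymm_bot e] at hKH
        exact absurd hKH.symm (ne_of_lt hlt)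
      · exact h
    rcases hne with ⟨i, hi⟩
    refine ⟨i, ?_⟩
    have hsub : ({i} : Set (Fin n)) ⊆ e ⟨A, hmem⟩ := Set.singleton_subset_iff.2 hi
    have h1 := e.symm.monotone hsub
    rw [e.symm_apply_apply] at h1
    have h2 : ((e.symm {i} : Set.Icc H (⊤ : Subgroup G)) : Subgroup G) ≤ A :=
      Subtype.coe_le_coe.2 h1
    exact hmin _ (esymm_ne_bot e ⟨i, rfl⟩) h2
  · rintro ⟨i, rfl⟩
    exact esymm_atom e i

lemma atom_inj :
    Function.Injective
      (fun i : Fin n => ((e.symm {i} : Set.Icc H (⊤ : Subgroup G)) : Subgroup G)) := by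
  intro i j hij
  have h1 : (e.symm {i} : Set.Icc H (⊤ : Subgroup G)) = e.symm {j} :=
    Subtype.coe_injective hij
  have h2 : ({i} : Set (Fin n)) = {j} := e.symm.injective h1
  exact Set.singleton_eq_singleton_iff.1 h2

end Aux

lemma index_formula {G : Type*} [Group G] [Finite G] {H : Subgroup G} {n : ℕ}
    (e : (Set.Icc H (⊤ : Subgroup G)) ≃o Set (Fin n))
    (hsplit : ∀ A Ac : Subgroup G, IsMinimalOvergroup H A → H ≤ Ac →
      A ⊓ Ac = H → A ⊔ Ac = ⊤ →
      ∀ K : Subgroup G, H ≤ K → K ≤ Ac → K.relIndex (K ⊔ A) = H.relIndex A)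
    (S : Finset (Fin n)) :
    ((e.symm ((↑S : Set (Fin n))ᶜ) : Set.Icc H (⊤ : Subgroup G)) : Subgroup G).index =
      ∏ i ∈ S, H.relIndex ((e.symm {i} : Set.Icc H (⊤ : Subgroup G)) : Subgroup G) := by
  classical
  induction S using Finset.induction_on with
  | empty =>
    have h : ((↑(∅ : Finset (Fin n)) : Set (Fin n))ᶜ) = Set.univ := by simp
    rw [h, esymm_univ e, Subgroup.index_top, Finset.prod_empty]
  | @insert i S hiS ih =>
    set A : Subgroup G := ((e.symm {i} : Set.Icc H (⊤ : Subgroup G)) : Subgroup G) with hA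
    set Ac : Subgroup G := ((e.symm ({i}ᶜ) : Set.Icc H (⊤ : Subgroup G)) : Subgroup G) with hAc
    set T' : Set (Fin n) := (↑(insert i S) : Set (Fin n))ᶜ with hT'
    set T : Set (Fin n) := (↑S : Set (Fin n))ᶜ with hT
    have hTT' : T' ∪ {i} = T := by
      ext j
      simp only [hT', hT, Set.mem_union, Set.mem_compl_iff, Finset.coe_insert,
        Set.mem_insert_iff, Finset.mem_coe, Set.mem_singleton_iff]
      constructor
      · rintro (h | rfl)
        · exact fun hj => h (Or.inr hj)
        · exact fun hj => hiS hj
      · intro h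
        by_cases hji : j = i
        · exact Or.inr hji
        · exact Or.inl (fun hc => by rcases hc with rfl | hc; exact hji rfl; exact h hc)
    set K : Subgroup G := ((e.symm T' : Set.Icc H (⊤ : Subgroup G)) : Subgroup G) with hK
    set K' : Subgroup G := ((e.symm T : Set.Icc H (⊤ : Subgroup G)) : Subgroup G) with hK'
    have hsup : K' = K ⊔ A := by rw [hK', ← hTT', esymm_sup e]
    have hKK' : K ≤ K' := by rw [hsup]; exact le_sup_left
    have hrel : K.relIndex K' = H.relIndex A := by
      rw [hsup]
      refine hsplit A Ac (esymm_atom e i) (e.symm _).2.1 ?_ ?_ K (e.symm _).2.1 ?_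
      · rw [hA, hAc, ← esymm_inf e, Set.inter_compl_self, esymm_bot e]
      · rw [hA, hAc, ← esymm_sup e, Set.union_compl_self, esymm_univ e]
      · refine e.symm.monotone ?_
        intro j hj hji
        rw [Set.mem_singleton_iff] at hji
        subst hji
        exact hj (by simp [hT'])
    have hmul := Subgroup.relIndex_mul_index hKK'
    rw [hrel, ih] at hmul
    rw [← hmul, Finset.prod_insert hiS]

/-- If in a boolean interval `[H,G]` every atom `A` satisfies
`|⟨K,A⟩ : K| = |A:H|` for all `K ∈ [H, A^∁]`, then the dual Euler totient equals
`∏ᵢ (|Aᵢ:H| - 1) > 0`, the product being over the atoms of `[H,G]`. -/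
theorem dual_euler_totient_product_formula {G : Type*} [Group G] [Finite G]
    (H : Subgroup G) (n : ℕ)
    (e : (Set.Icc H (⊤ : Subgroup G)) ≃o Set (Fin n))
    (hsplit : ∀ A Ac : Subgroup G, IsMinimalOvergroup H A → H ≤ Ac →
      A ⊓ Ac = H → A ⊔ Ac = ⊤ →
      ∀ K : Subgroup G, H ≤ K → K ≤ Ac → K.relIndex (K ⊔ A) = H.relIndex A) :
    dualEulerTotient H e =
      ∏ᶠ A ∈ {A : Subgroup G | IsMinimalOvergroup H A}, ((H.relIndex A : ℤ) - 1) ∧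
    0 < dualEulerTotient H e := by
  classical
  letI : Fintype (Set.Icc H (⊤ : Subgroup G)) := Fintype.ofFinite _
  set a : Fin n → ℕ :=
    fun i => H.relIndex ((e.symm {i} : Set.Icc H (⊤ : Subgroup G)) : Subgroup G) with ha
  have key : ∑ s : Finset (Fin n), (-1 : ℤ) ^ s.card * ∏ i ∈ sᶜ, (a i : ℤ) =
      ∏ i : Fin n, ((a i : ℤ) - 1) := by
    have h1 : ∏ i : Fin n, ((a i : ℤ) - 1) = ∏ i ∈ Finset.univ, (-1 + (a i : ℤ)) :=
      Finset.prod_congr rfl (fun i _ => by ring)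
    rw [h1, Finset.prod_add, Finset.powerset_univ]
    apply Finset.sum_congr rfl
    intro t _
    rw [Finset.prod_const, ← Finset.compl_eq_univ_sdiff]
  have hmain : dualEulerTotient H e = ∏ i : Fin n, ((a i : ℤ) - 1) := by
    rw [dualEulerTotient, finsum_eq_sum_of_fintype,
      ← Equiv.sum_comp (Fintype.finsetEquivSet.trans e.symm.toEquiv), ← key]
    apply Finset.sum_congr rfl
    intro s _
    simp only [Equiv.trans_apply, Fintype.finsetEquivSet_apply]
    show (-1 : ℤ) ^ ((e (e.symm ↑s)).ncard) *
        (((e.symm (↑s : Set (Fin n)) : Set.Icc H (⊤ : Subgroup G)) : Subgroup G).index : ℤ) = _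
    rw [e.apply_symm_apply, Set.ncard_coe_finset]
    congr 1
    have h1 : (↑s : Set (Fin n)) = ((↑(sᶜ) : Set (Fin n)))ᶜ := by
      rw [Finset.coe_compl, compl_compl]
    rw [h1, index_formula e hsplit (sᶜ)]
    push_cast
    rfl
  have hR : ∏ᶠ A ∈ {A : Subgroup G | IsMinimalOvergroup H A}, ((H.relIndex A : ℤ) - 1) =
      ∏ i : Fin n, ((a i : ℤ) - 1) := by
    rw [atom_range e, finprod_mem_range (atom_inj e), finprod_eq_prod_of_fintype]
  have hpos : 0 < ∏ i : Fin n, ((a i : ℤ) - 1) := by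
    apply Finset.prod_pos
    intro i _
    have h0 : a i ≠ 0 := Subgroup.index_ne_zero_of_finite
    have h1 : a i ≠ 1 := by
      intro h
      have h2 := Subgroup.relIndex_eq_one.1 h
      exact absurd h2 (not_le_of_gt (esymm_atom e i).1)
    have h2 : 2 ≤ a i := by omega
    have h3 : (2 : ℤ) ≤ (a i : ℤ) := by exact_mod_cast h2
    linarith
  exact ⟨hmain.trans hR.symm, hmain ▸ hpos⟩
end
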